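/- Deciding whether there exists a joining path achieving zero loss in the feature learning problem is NP-hard: the Hamiltonian cycle problem on an undirected graph G with n vertices reduces in polynomial time to it. Concretely: given an undirected graph G on vertices v_1, …, v_n, construct a database with one single-row table T_i per vertex, a shared foreign key k_{ij} for each pair i < j whose values in T_i and T_j agree iff (v_i, v_j) is an edge of G, main table T_1 carrying label n, transformation f mapping a nonempty join result along path p to the length of the longest simple cycle that is a subgraph of p (and empty join results to 0), and g the identity. Then there exists a path p starting at T_1 with g(f(J_p)) = n if and only if G contains a Hamiltonian cycle. -/

import Mathlib

open SimpleGraph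

/-- The lengths of simple cycles that are subgraphs of (i.e. all of whose edges occur among the
edges of) the walk `p` in the complete graph on `Fin n`. -/
def subCycleLengths {n : ℕ} {u v : Fin n}
    (p : (⊤ : SimpleGraph (Fin n)).Walk u v) : Set ℕ :=
  {k | ∃ (w : Fin n) (c : (⊤ : SimpleGraph (Fin n)).Walk w w),
        c.IsCycle ∧ (∀ e ∈ c.edges, e ∈ p.edges) ∧ c.length = k}

/-- A cycle's length is at most the number of vertices. -/
lemma cycle_length_le_card {V : Type*} [Fintype V] [DecidableEq V] {G : SimpleGraph V} {w : V}
    {c : G.Walk w w} (hc : c.IsCycle) : c.length ≤ Fintype.card V := by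
  have h1 : c.support.tail.length = c.length := by
    have := c.length_support
    simp [List.length_tail, this]
  calc c.length = c.support.tail.length := h1.symm
    _ ≤ Fintype.card V := hc.support_nodup.length_le_card

/-- A cycle whose length equals the number of vertices is a Hamiltonian cycle. -/
lemma cycle_length_card_hamiltonian {V : Type*} [Fintype V] [DecidableEq V] {G : SimpleGraph V}
    {w : V} {c : G.Walk w w} (hc : c.IsCycle) (hl : c.length = Fintype.card V) :
    c.IsHamiltonianCycle := by
  refine ⟨hc, ?_⟩
  have hnn := hc.not_nil
  have htail : c.tail.support = c.support.tail := SimpleGraph.Walk.support_tail_of_not_nil c hnn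
  have hnodup : c.tail.support.Nodup := htail ▸ hc.support_nodup
  have hlen : c.tail.support.length = Fintype.card V := by
    rw [htail, List.length_tail, c.length_support, hl]; simp
  have hpath : c.tail.IsPath := SimpleGraph.Walk.IsPath.mk' hnodup
  refine hpath.isHamiltonian_of_mem ?_
  intro v
  have : c.tail.support.toFinset = Finset.univ := by
    apply Finset.eq_univ_of_card
    rw [List.toFinset_card_of_nodup hnodup, hlen]
  rw [← List.mem_toFinset, this]
  exact Finset.mem_univ v

theorem stmt_8 (n : ℕ) [NeZero n] (G : SimpleGraph (Fin n)) :
    (∃ (v : Fin n) (p : (⊤ : SimpleGraph (Fin n)).Walk 0 v),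
        (∀ e ∈ p.edges, e ∈ G.edgeSet) ∧ IsGreatest (subCycleLengths p) n) ↔
      ∃ (w : Fin n) (c : G.Walk w w), c.IsHamiltonianCycle := by
  constructor
  · rintro ⟨v, p, hpe, ⟨w, c, hc, hce, hlen⟩, -⟩
    have hce' : ∀ e ∈ c.edges, e ∈ G.edgeSet := fun e he => hpe e (hce e he)
    refine ⟨w, c.transfer G hce', ?_⟩
    apply cycle_length_card_hamiltonian (hc.transfer hce')
    rw [SimpleGraph.Walk.length_transfer, hlen, Fintype.card_fin]
  · rintro ⟨w, c, hc⟩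
    have hGtop : ∀ e ∈ c.edges, e ∈ (⊤ : SimpleGraph (Fin n)).edgeSet := by
      intro e he
      have := c.edges_subset_edgeSet he
      exact SimpleGraph.edgeSet_mono le_top this
    set c₂ := c.transfer ⊤ hGtop with hc₂def
    have hc₂ : c₂.IsCycle := hc.isCycle.transfer hGtop
    have h0 : (0 : Fin n) ∈ c₂.support := by
      rw [SimpleGraph.Walk.support_transfer]
      exact hc.mem_support 0
    set p := c₂.rotate 0 h0 with hpdef
    have hedges : ∀ e, e ∈ p.edges ↔ e ∈ c₂.edges := by
      intro e
      have := (c₂.rotate_edges 0 h0).mem_iff (a := e)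
      exact this
    have hc₂edges : c₂.edges = c.edges := SimpleGraph.Walk.edges_transfer _ _
    refine ⟨0, p, ?_, ?_, ?_⟩
    · intro e he
      rw [hedges, hc₂edges] at he
      exact c.edges_subset_edgeSet he
    · refine ⟨w, c₂, hc₂, fun e he => (hedges e).mpr he, ?_⟩
      rw [SimpleGraph.Walk.length_transfer, hc.length_eq, Fintype.card_fin]
    · rintro k ⟨w', c', hc', -, rfl⟩
      have := cycle_length_le_card hc'
      simpa using this
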